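/- Let n ≥ 3 and 0 ≤ a < (n-2)/2. Suppose u is a positive C² function on the punctured closed unit ball B̄₁(0) \ {0} of ℝⁿ satisfying −div(|x|^{-2a}∇u)(x) ≥ 0 for all x ∈ B̄₁(0) \ {0}. Then there exists a constant K > 0 such that u(x) ≥ K for all x ∈ B̄₁(0) \ {0}. -/

import Mathlib

open MeasureTheory Real Filter Topology

noncomputable section

/-- Coordinate Laplacian on Euclidean space. -/
def lapl {n : ℕ} (w : EuclideanSpace ℝ (Fin n) → ℝ) (x : EuclideanSpace ℝ (Fin n)) : ℝ :=
  ∑ i : Fin n, fderiv ℝ (fun y => fderiv ℝ w y (EuclideanSpace.single i 1)) x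
    (EuclideanSpace.single i 1)

/-- The weighted divergence `div(|x|^(-2a) ∇w)(x) = |x|^(-2a) (Δw(x) - 2a⟨x,∇w(x)⟩/|x|²)`. -/
def wdiv {n : ℕ} (a : ℝ) (w : EuclideanSpace ℝ (Fin n) → ℝ) (x : EuclideanSpace ℝ (Fin n)) : ℝ :=
  ‖x‖ ^ (-(2*a)) * (lapl w x - 2*a * (@inner ℝ _ _ x (gradient w x)) / ‖x‖^2)

/-- Finiteness of the weighted Dirichlet energy `∫ |x|^(-2a) |∇w|² < ∞`. -/
def finiteEnergy {n : ℕ} (a : ℝ) (w : EuclideanSpace ℝ (Fin n) → ℝ) : Prop :=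
  Integrable (fun x : EuclideanSpace ℝ (Fin n) => ‖x‖ ^ (-(2*a)) * ‖gradient w x‖^2)

section Aux

open Set

/-- 1-D second derivative test at a local minimum. -/
lemma second_deriv_test {f g : ℝ → ℝ} {d : ℝ}
    (hf : ∀ᶠ t in 𝓝 (0:ℝ), HasDerivAt f (g t) t)
    (hg : HasDerivAt g d 0) (hmin : IsLocalMin f 0) : 0 ≤ d := by
  by_contra hd
  push_neg at hd
  have hg0 : g 0 = 0 := hmin.hasDerivAt_eq_zero hf.self_of_nhds
  obtain ⟨r, hr0, hball⟩ := Metric.mem_nhds_iff.mp (hf.and hmin)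
  have hslope : Tendsto (slope g 0) (𝓝[≠] (0:ℝ)) (𝓝 d) :=
    hasDerivAt_iff_tendsto_slope.mp hg
  have hev : ∀ᶠ t in 𝓝[<] (0:ℝ), slope g 0 t < d/2 ∧ -r < t := by
    have h1 : ∀ᶠ t in 𝓝[≠] (0:ℝ), slope g 0 t < d/2 :=
      hslope.eventually_lt_const (by linarith)
    have h2 : ∀ᶠ t in 𝓝[<] (0:ℝ), slope g 0 t < d/2 :=
      h1.filter_mono (nhdsWithin_mono _ (fun t ht => ne_of_lt ht))
    have h3 : ∀ᶠ t in 𝓝[<] (0:ℝ), -r < t :=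
      eventually_nhdsWithin_of_eventually_nhds
        (eventually_gt_nhds (by linarith : -r < (0:ℝ)))
    exact h2.and h3
  obtain ⟨t1, ht1, hsub⟩ := mem_nhdsLT_iff_exists_Ioo_subset.mp hev
  set m : ℝ := max t1 (-r) with hm
  have hm0 : m < 0 := by
    simp only [hm, max_lt_iff]
    exact ⟨ht1, by linarith⟩
  set c : ℝ := m / 2 with hc
  have hcm : m < c := by rw [hc]; linarith
  have hc0 : c < 0 := by rw [hc]; linarith
  have hcr : -r < c := by
    have : -r ≤ m := le_max_right _ _
    linarith
  have hct1 : t1 < c := lt_of_le_of_lt (le_max_left _ _) hcm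
  have hgpos : ∀ t ∈ Ioo c 0, 0 < g t := by
    intro t ht
    have htmem : t ∈ Ioo t1 0 := ⟨lt_trans hct1 ht.1, ht.2⟩
    have hs := hsub htmem
    have hslt : slope g 0 t < d/2 := hs.1
    rw [slope_def_field, hg0] at hslt
    have h4 : g t / t < 0 := by
      have : (g t - 0) / (t - 0) = g t / t := by ring_nf
      rw [this] at hslt
      linarith
    rcases div_neg_iff.mp h4 with h | h
    · exact h.1
    · linarith [ht.2, h.2]
  have hball' : ∀ t ∈ Icc c 0, HasDerivAt f (g t) t ∧ f 0 ≤ f t := by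
    intro t ht
    apply hball
    rw [Metric.mem_ball, Real.dist_eq, sub_zero, abs_lt]
    constructor
    · linarith [ht.1]
    · linarith [ht.2, hr0]
  have hmono : StrictMonoOn f (Icc c 0) := by
    apply strictMonoOn_of_deriv_pos (convex_Icc c 0)
    · intro t ht
      exact ((hball' t ht).1.continuousAt).continuousWithinAt
    · intro t ht
      rw [interior_Icc] at ht
      rw [((hball' t (Ioo_subset_Icc_self ht)).1).deriv]
      exact hgpos t ht
  have h5 : f c < f 0 := hmono (⟨le_refl c, le_of_lt hc0⟩) (⟨le_of_lt hc0, le_refl 0⟩) hc0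
  have h6 : f 0 ≤ f c := (hball' c ⟨le_refl c, le_of_lt hc0⟩).2
  linarith

variable {n : ℕ}
local notation "E" => EuclideanSpace ℝ (Fin n)

lemma hasFDerivAt_normSq_rpow (p : ℝ) {x : E} (hx : x ≠ 0) :
    HasFDerivAt (fun y : E => (‖y‖^2 : ℝ) ^ p)
      ((2 * p * (‖x‖^2 : ℝ) ^ (p-1)) • innerSL ℝ x) x := by
  have h1 : HasFDerivAt (fun y : E => (‖y‖^2 : ℝ)) (2 • innerSL ℝ x) x :=
    (hasStrictFDerivAt_norm_sq x).hasFDerivAt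
  have h2 : HasDerivAt (fun t : ℝ => t ^ p) (p * (‖x‖^2 : ℝ) ^ (p-1)) (‖x‖^2) :=
    Real.hasDerivAt_rpow_const (Or.inl (pow_ne_zero 2 (norm_ne_zero_iff.mpr hx)))
  have h3 := h2.comp_hasFDerivAt x h1
  refine h3.congr_fderiv ?_
  ext w
  simp [smul_smul]
  ring

lemma inner_single_one (x : E) (i : Fin n) :
    (inner ℝ x (EuclideanSpace.single i (1:ℝ)) : ℝ) = x i := by
  simp [EuclideanSpace.inner_single_right]

lemma fderiv_normSq_rpow (p : ℝ) {y : E} (hy : y ≠ 0) :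
    fderiv ℝ (fun y : E => (‖y‖^2 : ℝ) ^ p) y
      = (2 * p * (‖y‖^2 : ℝ) ^ (p-1)) • innerSL ℝ y :=
  (hasFDerivAt_normSq_rpow p hy).fderiv

lemma sum_sq_eq_normSq (x : E) : ∑ i, (x i)^2 = ‖x‖^2 := by
  rw [PiLp.norm_sq_eq_of_L2]
  simp [sq_abs]

lemma hasFDerivAt_coordFn (p : ℝ) (i : Fin n) {x : E} (hx : x ≠ 0) :
    HasFDerivAt (fun y : E => 2*p*(‖y‖^2:ℝ)^(p-1) * (y i))
      ((2*p) • ((‖x‖^2:ℝ)^(p-1) • (EuclideanSpace.proj (𝕜 := ℝ) i)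
        + (x i) • ((2*(p-1)*(‖x‖^2:ℝ)^(p-1-1)) • innerSL ℝ x))) x := by
  have hA : HasFDerivAt (fun y : E => (‖y‖^2 : ℝ) ^ (p-1))
      ((2*(p-1)*(‖x‖^2:ℝ)^(p-1-1)) • innerSL ℝ x) x := hasFDerivAt_normSq_rpow (p-1) hx
  have hB : HasFDerivAt (fun y : E => y i) (EuclideanSpace.proj (𝕜 := ℝ) i) x :=
    (EuclideanSpace.proj (𝕜 := ℝ) i).hasFDerivAt
  have hAB := (hA.mul hB).const_mul (2*p)
  refine hAB.congr_of_eventuallyEq (Filter.Eventually.of_forall fun y => ?_)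
  simp only [Pi.mul_apply]
  ring

lemma eventually_fderiv_coord (p : ℝ) (i : Fin n) {x : E} (hx : x ≠ 0) :
    (fun y : E => fderiv ℝ (fun z : E => (‖z‖^2 : ℝ) ^ p) y (EuclideanSpace.single i 1))
      =ᶠ[𝓝 x] (fun y : E => 2*p*(‖y‖^2:ℝ)^(p-1) * (y i)) := by
  filter_upwards [(isOpen_compl_singleton (x := (0:E))).mem_nhds hx] with y hy
  rw [fderiv_normSq_rpow p hy]
  simp [inner_single_one]

lemma lapl_normSq_rpow (p : ℝ) {x : E} (hx : x ≠ 0) :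
    lapl (fun y : E => (‖y‖^2 : ℝ) ^ p) x
      = (4*p*(p-1) + 2*p*n) * (‖x‖^2 : ℝ) ^ (p-1) := by
  have hnorm : (0:ℝ) < ‖x‖^2 := pow_pos (norm_pos_iff.mpr hx) 2
  have key : ∀ i : Fin n,
      fderiv ℝ (fun y : E => fderiv ℝ (fun z : E => (‖z‖^2 : ℝ) ^ p) y
        (EuclideanSpace.single i 1)) x (EuclideanSpace.single i 1)
      = 2*p*(‖x‖^2:ℝ)^(p-1) + 4*p*(p-1)*(‖x‖^2:ℝ)^(p-2) * (x i)^2 := by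
    intro i
    rw [(eventually_fderiv_coord p i hx).fderiv_eq, (hasFDerivAt_coordFn p i hx).fderiv]
    simp [inner_single_one]
    rw [show p-1-1 = p-2 by ring]
    ring
  unfold lapl
  simp only [key]
  rw [Finset.sum_add_distrib]
  simp only [Finset.sum_const, Finset.card_univ, Fintype.card_fin, nsmul_eq_mul]
  rw [← Finset.mul_sum, sum_sq_eq_normSq]
  have h2 : (‖x‖^2:ℝ)^(p-2) * ‖x‖^2 = (‖x‖^2:ℝ)^(p-1) := by
    rw [show p-2 = (p-1)-1 by ring, Real.rpow_sub hnorm, Real.rpow_one]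
    field_simp
  rw [mul_assoc (4*p*(p-1)), h2]
  ring

lemma lapl_nonneg_of_isLocalMin {h : E → ℝ} {x0 : E}
    (hdiff : ∀ᶠ y in 𝓝 x0, DifferentiableAt ℝ h y)
    (hdiff2 : ∀ i : Fin n,
      DifferentiableAt ℝ (fun y => fderiv ℝ h y (EuclideanSpace.single i 1)) x0)
    (hmin : IsLocalMin h x0) : 0 ≤ lapl h x0 := by
  apply Finset.sum_nonneg
  intro i _
  set e : E := EuclideanSpace.single i 1 with he
  set ℓ : ℝ → E := fun t => x0 + t • e with hℓ
  have hℓ0 : ℓ 0 = x0 := by simp [hℓ]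
  have hℓd : ∀ t : ℝ, HasDerivAt ℓ e t := by
    intro t
    have := ((hasDerivAt_id t).smul_const e).const_add x0
    rw [one_smul] at this
    exact this
  have hℓc : Continuous ℓ := by fun_prop
  -- local min of h ∘ ℓ
  have hminℓ : IsLocalMin (h ∘ ℓ) 0 := by
    rw [← hℓ0] at hmin
    exact hmin.comp_continuous hℓc.continuousAt
  -- eventual derivative
  have hf : ∀ᶠ t in 𝓝 (0:ℝ), HasDerivAt (h ∘ ℓ) (fderiv ℝ h (ℓ t) e) t := by
    have : Tendsto ℓ (𝓝 0) (𝓝 x0) := by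
      rw [← hℓ0]; exact hℓc.continuousAt
    filter_upwards [this.eventually hdiff] with t ht
    exact ht.hasFDerivAt.comp_hasDerivAt t (hℓd t)
  have hg : HasDerivAt (fun t => fderiv ℝ h (ℓ t) e)
      (fderiv ℝ (fun y => fderiv ℝ h y e) x0 e) 0 := by
    have hx : HasFDerivAt (fun y => fderiv ℝ h y e)
        (fderiv ℝ (fun y => fderiv ℝ h y e) x0) (ℓ 0) := by
      rw [hℓ0]; exact (hdiff2 i).hasFDerivAt
    exact hx.comp_hasDerivAt 0 (hℓd 0)
  exact second_deriv_test hf hg hminℓ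

lemma no_interior_min {a p ε : ℝ} {u : E → ℝ} {x0 : E}
    (hp1 : (0:ℝ) < -(2*p)) (hp2 : (0:ℝ) < 2*p - 2 + n - 2*a) (hε : 0 < ε)
    (hx0 : x0 ≠ 0) (hu2 : ContDiffAt ℝ 2 u x0)
    (hws : wdiv a u x0 ≤ 0)
    (hmin : IsLocalMin (fun y => u y + ε * (‖y‖^2:ℝ)^p) x0) : False := by
  set v : E → ℝ := fun y => (‖y‖^2:ℝ)^p with hv
  set h : E → ℝ := fun y => u y + ε * v y with hh
  have hT : (0:ℝ) < ‖x0‖^2 := pow_pos (norm_pos_iff.mpr hx0) 2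
  -- eventual differentiability
  have hne : ∀ᶠ y in 𝓝 x0, (y : E) ≠ 0 :=
    (isOpen_compl_singleton (x := (0:E))).mem_nhds hx0
  have hud : ∀ᶠ y in 𝓝 x0, DifferentiableAt ℝ u y := by
    filter_upwards [hu2.eventually (by simp)] with y hy
    exact hy.differentiableAt (by norm_num)
  have hvd : ∀ᶠ y in 𝓝 x0, DifferentiableAt ℝ v y := by
    filter_upwards [hne] with y hy
    exact (hasFDerivAt_normSq_rpow p hy).differentiableAt
  have hdiffh : ∀ᶠ y in 𝓝 x0, DifferentiableAt ℝ h y := by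
    filter_upwards [hud, hvd] with y h1 h2
    exact h1.add (h2.const_mul ε)
  -- eventual fderiv decomposition
  have hfd : ∀ᶠ y in 𝓝 x0, fderiv ℝ h y = fderiv ℝ u y + ε • fderiv ℝ v y := by
    filter_upwards [hud, hvd] with y h1 h2
    rw [hh]
    rw [fderiv_fun_add h1 (h2.const_mul ε), fderiv_const_mul h2 ε]
  -- per-coordinate differentiability
  have hDu : ∀ i : Fin n, DifferentiableAt ℝ
      (fun y => fderiv ℝ u y (EuclideanSpace.single i 1)) x0 := by
    intro i
    have h1 : ContDiffAt ℝ 1 (fderiv ℝ u) x0 := hu2.fderiv_right (by norm_num)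
    exact (h1.differentiableAt (by norm_num)).clm_apply (differentiableAt_const _)
  have hDvF : ∀ i : Fin n, DifferentiableAt ℝ
      (fun y : E => 2*p*(‖y‖^2:ℝ)^(p-1) * (y i)) x0 :=
    fun i => (hasFDerivAt_coordFn p i hx0).differentiableAt
  have hDv : ∀ i : Fin n, DifferentiableAt ℝ
      (fun y => fderiv ℝ v y (EuclideanSpace.single i 1)) x0 :=
    fun i => ((eventually_fderiv_coord p i hx0).differentiableAt_iff).mpr (hDvF i)
  have hcoordh : ∀ i : Fin n, (fun y : E => fderiv ℝ h y (EuclideanSpace.single i 1))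
      =ᶠ[𝓝 x0] (fun y => fderiv ℝ u y (EuclideanSpace.single i 1)
        + ε * fderiv ℝ v y (EuclideanSpace.single i 1)) := by
    intro i
    filter_upwards [hfd] with y hy
    rw [hy]
    simp
  have hDh : ∀ i : Fin n, DifferentiableAt ℝ
      (fun y => fderiv ℝ h y (EuclideanSpace.single i 1)) x0 :=
    fun i => ((hcoordh i).differentiableAt_iff).mpr ((hDu i).add ((hDv i).const_mul ε))
  have hlapl0 : 0 ≤ lapl h x0 := lapl_nonneg_of_isLocalMin hdiffh hDh hmin
  have hlapl_add : lapl h x0 = lapl u x0 + ε * lapl v x0 := by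
    unfold lapl
    rw [Finset.mul_sum, ← Finset.sum_add_distrib]
    apply Finset.sum_congr rfl
    intro i _
    rw [(hcoordh i).fderiv_eq, fderiv_fun_add (hDu i) ((hDv i).const_mul ε),
      fderiv_const_mul (hDv i) ε]
    simp
  have hfz : fderiv ℝ h x0 = 0 := hmin.fderiv_eq_zero
  have hfuv : fderiv ℝ u x0 + ε • fderiv ℝ v x0 = 0 := by
    rw [← hfd.self_of_nhds, hfz]
  set T : ℝ := ‖x0‖^2 with hTdef
  have hinner : (inner ℝ x0 (gradient u x0) : ℝ) = -(ε * (2*p*T^(p-1) * T)) := by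
    rw [real_inner_comm]
    have hgr : gradient u x0 = (InnerProductSpace.toDual ℝ (EuclideanSpace ℝ (Fin n))).symm
        (fderiv ℝ u x0) := rfl
    rw [hgr, InnerProductSpace.toDual_symm_apply]
    have hneg : fderiv ℝ u x0 = -(ε • fderiv ℝ v x0) :=
      eq_neg_of_add_eq_zero_left hfuv
    rw [hneg, fderiv_normSq_rpow p hx0]
    simp only [ContinuousLinearMap.neg_apply, ContinuousLinearMap.coe_smul', Pi.smul_apply,
      innerSL_apply_apply, smul_eq_mul, real_inner_self_eq_norm_sq, ← hTdef]
  have hlaplv : lapl v x0 = (4*p*(p-1) + 2*p*(n:ℝ)) * T^(p-1) := lapl_normSq_rpow p hx0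
  have hlaplu : -(ε * ((4*p*(p-1)+2*p*(n:ℝ)) * T^(p-1))) ≤ lapl u x0 := by
    rw [hlapl_add, hlaplv] at hlapl0
    linarith
  have hQ : (0:ℝ) < T^(p-1) := Real.rpow_pos_of_pos hT _
  have hR : (0:ℝ) < ‖x0‖ ^ (-(2*a)) := Real.rpow_pos_of_pos (norm_pos_iff.mpr hx0) _
  unfold wdiv at hws
  rw [hinner, ← hTdef] at hws
  have hpos : 0 < lapl u x0 - 2*a * (-(ε * (2*p*T^(p-1) * T))) / T := by
    have h1 : 2*a * (-(ε * (2*p*T^(p-1) * T))) / T = -(4*a*p*ε*T^(p-1)) := by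
      field_simp
      ring
    rw [h1]
    have key : 0 < ε * T^(p-1) * (-(2*p)) * (2*p-2+(n:ℝ)-2*a) :=
      mul_pos (mul_pos (mul_pos hε hQ) hp1) hp2
    have hid : ε * T^(p-1) * (-(2*p)) * (2*p-2+(n:ℝ)-2*a)
        = -(ε * ((4*p*(p-1)+2*p*(n:ℝ)) * T^(p-1))) + 4*a*p*ε*T^(p-1) := by ring
    linarith
  exact absurd hws (not_le.mpr (mul_pos hR hpos))

end Aux

theorem stmt {n : ℕ} (hn : 3 ≤ n) (a : ℝ) (ha0 : 0 ≤ a) (ha : a < ((n:ℝ)-2)/2)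
    (u : EuclideanSpace ℝ (Fin n) → ℝ)
    (hu : ContDiffOn ℝ 2 u (Metric.closedBall (0 : EuclideanSpace ℝ (Fin n)) 1 \ {0}))
    (hupos : ∀ x ∈ Metric.closedBall (0 : EuclideanSpace ℝ (Fin n)) 1 \ {0}, 0 < u x)
    (hsup : ∀ x ∈ Metric.closedBall (0 : EuclideanSpace ℝ (Fin n)) 1 \ {0},
      0 ≤ -(wdiv a u x)) :
    ∃ K : ℝ, 0 < K ∧
      ∀ x ∈ Metric.closedBall (0 : EuclideanSpace ℝ (Fin n)) 1 \ {0}, K ≤ u x := by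
  classical
  set D : Set (EuclideanSpace ℝ (Fin n)) := Metric.closedBall (0 : EuclideanSpace ℝ (Fin n)) 1 \ {0} with hD
  set c : ℝ := ((n:ℝ) - 2 - 2*a)/2 with hcdef
  have hc : 0 < c := by
    rw [hcdef]
    have : 2*a < (n:ℝ) - 2 := by
      have := ha
      linarith [ha]
    linarith
  set p : ℝ := -c/2 with hpdef
  have hp1 : (0:ℝ) < -(2*p) := by rw [hpdef]; linarith
  have hp2 : (0:ℝ) < 2*p - 2 + (n:ℝ) - 2*a := by
    rw [hpdef]
    have : c = ((n:ℝ) - 2 - 2*a)/2 := hcdef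
    linarith
  have hpneg : p < 0 := by rw [hpdef]; linarith
  set v : EuclideanSpace ℝ (Fin n) → ℝ := fun y => (‖y‖^2 : ℝ) ^ p with hvdef
  -- continuity of u and of v away from 0
  have hucont : ContinuousOn u D := hu.continuousOn
  have hvcontAt : ∀ y : EuclideanSpace ℝ (Fin n), y ≠ 0 → ContinuousAt v y := fun y hy =>
    (hasFDerivAt_normSq_rpow p hy).differentiableAt.continuousAt
  -- minimum of u on the unit sphere
  have hsph_sub : Metric.sphere (0:EuclideanSpace ℝ (Fin n)) 1 ⊆ D := by
    intro y hy
    rw [Metric.mem_sphere, dist_zero_right] at hy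
    constructor
    · rw [Metric.mem_closedBall, dist_zero_right, hy]
    · simp only [Set.mem_singleton_iff]
      intro h0
      rw [h0] at hy
      simp at hy
  have hsph_ne : (Metric.sphere (0:EuclideanSpace ℝ (Fin n)) 1).Nonempty := by
    refine ⟨EuclideanSpace.single (⟨0, by omega⟩ : Fin n) (1:ℝ), ?_⟩
    rw [Metric.mem_sphere, dist_zero_right, EuclideanSpace.norm_single]
    norm_num
  obtain ⟨z, hz, hzmin⟩ := (isCompact_sphere (0:EuclideanSpace ℝ (Fin n)) 1).exists_isMinOn hsph_ne
    (hucont.mono hsph_sub)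
  set m : ℝ := u z with hmdef
  have hm : 0 < m := hupos z (hsph_sub hz)
  refine ⟨m, hm, ?_⟩
  intro x hx
  have hxne : x ≠ 0 := fun h0 => hx.2 (by simp [h0])
  have hxnorm : 0 < ‖x‖ := norm_pos_iff.mpr hxne
  have hxle : ‖x‖ ≤ 1 := by
    have := hx.1
    rwa [Metric.mem_closedBall, dist_zero_right] at this
  -- key claim: ∀ ε > 0, m ≤ u x + ε * v x
  have key : ∀ ε : ℝ, 0 < ε → m ≤ u x + ε * v x := by
    intro ε hε
    set δ0 : ℝ := (m/ε) ^ (1/(2*p)) with hδ0def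
    have hδ0 : 0 < δ0 := Real.rpow_pos_of_pos (by positivity) _
    set δ : ℝ := min ‖x‖ δ0 with hδdef
    have hδpos : 0 < δ := lt_min hxnorm hδ0
    have hδx : δ ≤ ‖x‖ := min_le_left _ _
    have hδδ0 : δ ≤ δ0 := min_le_right _ _
    have hδ1 : δ ≤ 1 := le_trans hδx hxle
    -- the barrier inequality at radius δ : m ≤ ε * (δ^2)^p
    have hbar : m ≤ ε * ((δ^2 : ℝ) ^ p) := by
      have h1 : (δ^2 : ℝ) ^ p = δ ^ (2*p) := by
        rw [← Real.rpow_natCast δ 2, ← Real.rpow_mul hδpos.le]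
        norm_num
      have h2 : δ0 ^ (2*p) = m/ε := by
        rw [hδ0def, ← Real.rpow_mul (by positivity), one_div,
          inv_mul_cancel₀ (by linarith : (2*p) ≠ 0), Real.rpow_one]
      have h3 : δ0 ^ (2*p) ≤ δ ^ (2*p) :=
        Real.rpow_le_rpow_of_nonpos hδpos hδδ0 (by linarith)
      rw [h1]
      rw [h2] at h3
      calc m = ε * (m/ε) := by field_simp
        _ ≤ ε * δ ^ (2*p) := by
            exact mul_le_mul_of_nonneg_left h3 hε.le
    -- the compact annulus
    set A : Set (EuclideanSpace ℝ (Fin n)) := Metric.closedBall (0:EuclideanSpace ℝ (Fin n)) 1 \ Metric.ball (0:EuclideanSpace ℝ (Fin n)) δ with hAdef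
    have hAsubD : A ⊆ D := by
      intro y hy
      refine ⟨hy.1, ?_⟩
      simp only [Set.mem_singleton_iff]
      intro h0
      have := hy.2
      rw [h0] at this
      exact this (Metric.mem_ball_self hδpos)
    have hAcpt : IsCompact A := (isCompact_closedBall _ _).diff Metric.isOpen_ball
    have hxA : x ∈ A := by
      refine ⟨hx.1, ?_⟩
      rw [Metric.mem_ball, dist_zero_right]
      exact not_lt.mpr hδx
    have hAcont : ContinuousOn (fun y => u y + ε * v y) A := by
      apply ContinuousOn.add (hucont.mono hAsubD)
      apply ContinuousOn.mul continuousOn_const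
      intro y hy
      have hyne : y ≠ 0 := fun h0 => (hAsubD hy).2 (by simp [h0])
      exact (hvcontAt y hyne).continuousWithinAt
    obtain ⟨x0, hx0A, hx0min⟩ := hAcpt.exists_isMinOn ⟨x, hxA⟩ hAcont
    have hx0le : ‖x0‖ ≤ 1 := by
      have := hx0A.1
      rwa [Metric.mem_closedBall, dist_zero_right] at this
    have hx0ge : δ ≤ ‖x0‖ := by
      have := hx0A.2
      rw [Metric.mem_ball, dist_zero_right] at this
      exact not_lt.mp this
    have hx0ne : x0 ≠ 0 := by
      intro h0
      rw [h0] at hx0ge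
      simp at hx0ge
      linarith
    have hx0D : x0 ∈ D := hAsubD hx0A
    -- the minimum value is at least m
    have hminval : m ≤ u x0 + ε * v x0 := by
      rcases eq_or_lt_of_le hx0le with h1 | h1
      · -- on the unit sphere
        have hvx0 : v x0 = 1 := by
          rw [hvdef]
          simp only
          rw [h1]
          norm_num
        have hux0 : m ≤ u x0 := hzmin (by
          rw [Metric.mem_sphere, dist_zero_right]; exact h1)
        rw [hvx0]
        nlinarith
      rcases eq_or_lt_of_le hx0ge with h2 | h2
      · -- on the inner sphere
        have hvx0 : v x0 = (δ^2 : ℝ) ^ p := by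
          rw [hvdef]
          simp only
          rw [← h2]
        have hux0 : 0 < u x0 := hupos x0 hx0D
        rw [hvx0]
        nlinarith
      · -- interior minimum: contradiction
        exfalso
        have hAn : A ∈ 𝓝 x0 := by
          have hopen : IsOpen (Metric.ball (0:EuclideanSpace ℝ (Fin n)) 1 \ Metric.closedBall (0:EuclideanSpace ℝ (Fin n)) δ) :=
            Metric.isOpen_ball.sdiff Metric.isClosed_closedBall
        -- x0 in this open set
          have hx0mem : x0 ∈ Metric.ball (0:EuclideanSpace ℝ (Fin n)) 1 \ Metric.closedBall (0:EuclideanSpace ℝ (Fin n)) δ := by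
            constructor
            · rw [Metric.mem_ball, dist_zero_right]; exact h1
            · rw [Metric.mem_closedBall, dist_zero_right]; push_neg; exact h2
          have hsub : Metric.ball (0:EuclideanSpace ℝ (Fin n)) 1 \ Metric.closedBall (0:EuclideanSpace ℝ (Fin n)) δ ⊆ A := by
            intro y hy
            exact ⟨Metric.ball_subset_closedBall hy.1,
              fun hy2 => hy.2 (Metric.ball_subset_closedBall hy2)⟩
          exact Filter.mem_of_superset (hopen.mem_nhds hx0mem) hsub
        have hlocmin : IsLocalMin (fun y => u y + ε * v y) x0 := hx0min.isLocalMin hAn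
        have hu2 : ContDiffAt ℝ 2 u x0 := by
          apply hu.contDiffAt
          have hopen : IsOpen (Metric.ball (0:EuclideanSpace ℝ (Fin n)) 1 \ {(0:EuclideanSpace ℝ (Fin n))}) :=
            Metric.isOpen_ball.sdiff isClosed_singleton
          apply Filter.mem_of_superset (hopen.mem_nhds ⟨by
            rw [Metric.mem_ball, dist_zero_right]; exact h1, hx0ne⟩)
          intro y hy
          exact ⟨Metric.ball_subset_closedBall hy.1, hy.2⟩
        have hws : wdiv a u x0 ≤ 0 := by linarith [hsup x0 hx0D]
        exact no_interior_min hp1 hp2 hε hx0ne hu2 hws hlocmin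
    exact le_trans hminval (hx0min hxA)
  -- conclude : m ≤ u x
  by_contra hcon
  push_neg at hcon
  have hvx : 0 < v x := Real.rpow_pos_of_pos (by positivity) _
  have := key ((m - u x)/(2 * v x)) (div_pos (by linarith) (by linarith))
  have hval : u x + (m - u x)/(2 * v x) * v x = u x + (m - u x)/2 := by
    have hvxne : v x ≠ 0 := ne_of_gt hvx
    field_simp
  rw [hval] at this
  linarith
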